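/- Let $r \ge 0$, $k \ge n_1 + r$, and let $a=(a_1,a_2), b=(b_1,b_2), c=(c_1,c_2)$ be $C^r$ spline pairs (i.e. $a_1\equiv a_2$, $b_1\equiv b_2$, $c_1\equiv c_2$ mod $(2u-1)^{r+1}$) with $\gcd(a_i,c_i)=\gcd(b_i,c_i)=1$ for $i=1,2$ and $n_1 = \max\{\deg a_1, \deg b_1, \deg c_1\}$. Let $\mathrm{Syz}_{i,k}$ denote the syzygies of $(a_i,b_i,c_i)$ of degree bounded by $(k-1,k,k)$, let $\mathcal{Q}^r_j = R_j/((2u-1)^{r+1})$, and let $\phi: \mathrm{Syz}_{1,k} \times \mathrm{Syz}_{2,k} \to \mathcal{Q}^r_{k-1} \times \mathcal{Q}^r_k \times \mathcal{Q}^r_k$ send $((A_1,B_1,C_1),(A_2,B_2,C_2))$ to the classes of $(A_1-A_2, B_1-B_2, C_1-C_2)$, and $\psi: \mathcal{Q}^r_{k-1} \times \mathcal{Q}^r_k \times \mathcal{Q}^r_k \to \mathcal{Q}^r_{n_1+k}$ send $(f,g,h)$ to $a_1 f + b_1 g + c_1 h$. Then the sequence $0 \to \mathrm{Syz}^{r,r,r}_k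 \to \mathrm{Syz}_{1,k} \times \mathrm{Syz}_{2,k} \xrightarrow{\phi} \mathcal{Q}^r_{k-1} \times \mathcal{Q}^r_k \times \mathcal{Q}^r_k \xrightarrow{\psi} \mathcal{Q}^r_{n_1+k} \to 0$ is exact, where $\mathrm{Syz}^{r,r,r}_k$ is the kernel of $\phi$, consisting of spline syzygies. -/

import Mathlib

open Polynomial

private lemma wb_cast_le {s t : ℕ} (h : s ≤ t) : (s : WithBot ℕ) ≤ (t : WithBot ℕ) := by
  exact_mod_cast h

private lemma wb_cast_lt {s t : ℕ} (h : s < t) : (s : WithBot ℕ) < (t : WithBot ℕ) := by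
  exact_mod_cast h

private lemma deg_le_of_lt_succ {p : ℝ[X]} {r : ℕ} (h : p.degree < ((r+1 : ℕ) : WithBot ℕ)) :
    p.degree ≤ (r : WithBot ℕ) := by
  rcases eq_or_ne p 0 with rfl | h0
  · simp
  · rw [degree_eq_natDegree h0] at h ⊢
    have h1 : p.natDegree < r + 1 := by exact_mod_cast h
    exact wb_cast_le (Nat.lt_succ_iff.mp h1)

/-- Solve `x*β + y*γ = m` with `β` reduced modulo `y`. -/
private lemma pair_solve (x y m : ℝ[X]) (h : IsCoprime x y) (hy0 : y ≠ 0) :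
    ∃ β γ : ℝ[X], x * β + y * γ = m ∧ β.degree < y.degree := by
  obtain ⟨p, q, hpq⟩ := h
  have hmon : (y * C y.leadingCoeff⁻¹).Monic := monic_mul_leadingCoeff_inv hy0
  refine ⟨(p*m) %ₘ (y * C y.leadingCoeff⁻¹),
    q*m + x * (C y.leadingCoeff⁻¹ * ((p*m) /ₘ (y * C y.leadingCoeff⁻¹))), ?_, ?_⟩
  · have hmod : (p*m) %ₘ (y * C y.leadingCoeff⁻¹)
        = p*m - (y * C y.leadingCoeff⁻¹) * ((p*m) /ₘ (y * C y.leadingCoeff⁻¹)) :=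
      modByMonic_eq_sub_mul_div _ _
    rw [hmod]
    linear_combination m * hpq
  · exact (degree_modByMonic_lt _ hmon).trans_le (degree_mul_leadingCoeff_inv y hy0).le

/-- Key lemma: if `deg m < n = max(deg a, deg b, deg c)` and `gcd(a,c) = gcd(b,c) = 1`,
then `a*α + b*β + c*γ = m` has a solution with `deg α ≤ n-2` and `deg β, deg γ ≤ n-1`. -/
private lemma key_solve (a b c m : ℝ[X]) (hac : IsCoprime a c) (hbc : IsCoprime b c) (n : ℕ)
    (hn : n = max a.natDegree (max b.natDegree c.natDegree))
    (hm : m.degree < (n : WithBot ℕ)) :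
    ∃ α β γ : ℝ[X], a*α + b*β + c*γ = m ∧
      (α = 0 ∨ α.natDegree + 2 ≤ n) ∧ (β = 0 ∨ β.natDegree + 1 ≤ n) ∧
      (γ = 0 ∨ γ.natDegree + 1 ≤ n) := by
  rcases eq_or_ne m 0 with rfl | hm0
  · exact ⟨0, 0, 0, by ring, Or.inl rfl, Or.inl rfl, Or.inl rfl⟩
  have hmn : m.natDegree < n := (natDegree_lt_iff_degree_lt hm0).mpr hm
  have hbn' : b.natDegree ≤ n := by omega
  have hcn' : c.natDegree ≤ n := by omega
  by_cases hcn : c.natDegree = n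
  · -- `c` has maximal degree: use coprimality of `b` and `c`, reduce modulo `c`
    have hc0 : c ≠ 0 := by intro h; rw [h] at hcn; simp at hcn; omega
    obtain ⟨β, γ, heq, hdeg⟩ := pair_solve b c m hbc hc0
    have hβ : β = 0 ∨ β.natDegree + 1 ≤ n := by
      rcases eq_or_ne β 0 with rfl | hβ0
      · exact Or.inl rfl
      · right; have := natDegree_lt_natDegree hβ0 hdeg; omega
    refine ⟨0, β, γ, by linear_combination heq, Or.inl rfl, hβ, ?_⟩
    rcases eq_or_ne γ 0 with rfl | hγ0
    · exact Or.inl rfl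
    right
    have h1 : (c*γ).natDegree = c.natDegree + γ.natDegree := natDegree_mul hc0 hγ0
    have h2 : c*γ = m - b*β := by linear_combination heq
    have h3 : (m - b*β).natDegree ≤ max m.natDegree (b*β).natDegree := natDegree_sub_le _ _
    have h4 : (b*β).natDegree ≤ b.natDegree + β.natDegree := natDegree_mul_le
    rw [h2] at h1
    have hβd : β.natDegree ≤ n - 1 := by
      rcases hβ with rfl | h
      · simp
      · omega
    omega
  by_cases hbn : b.natDegree = n
  · -- `b` has maximal degree: reduce modulo `b`
    have hb0 : b ≠ 0 := by intro h; rw [h] at hbn; simp at hbn; omega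
    obtain ⟨γ, β, heq, hdeg⟩ := pair_solve c b m hbc.symm hb0
    have hγ : γ = 0 ∨ γ.natDegree + 1 ≤ n := by
      rcases eq_or_ne γ 0 with rfl | hγ0
      · exact Or.inl rfl
      · right; have := natDegree_lt_natDegree hγ0 hdeg; omega
    refine ⟨0, β, γ, by linear_combination heq, Or.inl rfl, ?_, hγ⟩
    rcases eq_or_ne β 0 with rfl | hβ0
    · exact Or.inl rfl
    right
    have h1 : (b*β).natDegree = b.natDegree + β.natDegree := natDegree_mul hb0 hβ0
    have h2 : b*β = m - c*γ := by linear_combination heq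
    have h3 : (m - c*γ).natDegree ≤ max m.natDegree (c*γ).natDegree := natDegree_sub_le _ _
    have h4 : (c*γ).natDegree ≤ c.natDegree + γ.natDegree := natDegree_mul_le
    rw [h2] at h1
    have hγd : γ.natDegree ≤ n - 1 := by
      rcases hγ with rfl | h
      · simp
      · omega
    omega
  · -- `a` has strictly maximal degree: reduce modulo `a`
    have han : a.natDegree = n := by omega
    have hcn2 : c.natDegree < n := by omega
    have ha0 : a ≠ 0 := by intro h; rw [h] at han; simp at han; omega
    obtain ⟨γ, α, heq, hdeg⟩ := pair_solve c a m hac.symm ha0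
    have hγ : γ = 0 ∨ γ.natDegree + 1 ≤ n := by
      rcases eq_or_ne γ 0 with rfl | hγ0
      · exact Or.inl rfl
      · right; have := natDegree_lt_natDegree hγ0 hdeg; omega
    refine ⟨α, 0, γ, by linear_combination heq, ?_, Or.inl rfl, hγ⟩
    rcases eq_or_ne α 0 with rfl | hα0
    · exact Or.inl rfl
    right
    have h1 : (a*α).natDegree = a.natDegree + α.natDegree := natDegree_mul ha0 hα0
    have h2 : a*α = m - c*γ := by linear_combination heq
    have h3 : (m - c*γ).natDegree ≤ max m.natDegree (c*γ).natDegree := natDegree_sub_le _ _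
    have h4 : (c*γ).natDegree ≤ c.natDegree + γ.natDegree := natDegree_mul_le
    rw [h2] at h1
    have hγd : γ.natDegree ≤ n - 1 := by
      rcases hγ with rfl | h
      · simp
      · omega
    omega

/-- Exactness of the sequence
`0 → Syz^{r,r,r}_k → Syz_{1,k} × Syz_{2,k} → 𝒬^r_{k-1} × 𝒬^r_k × 𝒬^r_k → 𝒬^r_{n₁+k} → 0`
for `k ≥ n₁ + r`, stated concretely in terms of polynomial representatives:
(1) `ψ` is surjective; (2) the image of `φ` is contained in the kernel of `ψ`;
(3) the kernel of `ψ` is contained in the image of `φ`.  (Injectivity of the inclusion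
`Syz^{r,r,r}_k = ker φ → Syz_{1,k} × Syz_{2,k}` is definitional.) -/
theorem exact_sequence_spline_syzygies (r k n1 : ℕ) (a1 a2 b1 b2 c1 c2 : ℝ[X])
    (ha : (2 * X - 1) ^ (r + 1) ∣ a1 - a2)
    (hb : (2 * X - 1) ^ (r + 1) ∣ b1 - b2)
    (hc : (2 * X - 1) ^ (r + 1) ∣ c1 - c2)
    (hac1 : IsCoprime a1 c1) (hbc1 : IsCoprime b1 c1)
    (hac2 : IsCoprime a2 c2) (hbc2 : IsCoprime b2 c2)
    (hn1 : n1 = max a1.natDegree (max b1.natDegree c1.natDegree))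
    (hk : n1 + r ≤ k) :
    -- ψ is surjective
    (∀ w : ℝ[X], w.degree ≤ ((n1 + k : ℕ) : WithBot ℕ) →
      ∃ f g h : ℝ[X], f.degree < (k : WithBot ℕ) ∧ g.degree ≤ (k : WithBot ℕ) ∧
        h.degree ≤ (k : WithBot ℕ) ∧
        (2 * X - 1) ^ (r + 1) ∣ a1 * f + b1 * g + c1 * h - w) ∧
    -- im φ ⊆ ker ψ
    (∀ A1 B1 C1 A2 B2 C2 : ℝ[X],
      A1 * a1 + B1 * b1 + C1 * c1 = 0 → A2 * a2 + B2 * b2 + C2 * c2 = 0 →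
      A1.degree < (k : WithBot ℕ) → B1.degree ≤ (k : WithBot ℕ) → C1.degree ≤ (k : WithBot ℕ) →
      A2.degree < (k : WithBot ℕ) → B2.degree ≤ (k : WithBot ℕ) → C2.degree ≤ (k : WithBot ℕ) →
      (2 * X - 1) ^ (r + 1) ∣ a1 * (A1 - A2) + b1 * (B1 - B2) + c1 * (C1 - C2)) ∧
    -- ker ψ ⊆ im φ
    (∀ f g h : ℝ[X], f.degree < (k : WithBot ℕ) → g.degree ≤ (k : WithBot ℕ) →
      h.degree ≤ (k : WithBot ℕ) →
      (2 * X - 1) ^ (r + 1) ∣ a1 * f + b1 * g + c1 * h →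
      ∃ A1 B1 C1 A2 B2 C2 : ℝ[X],
        A1 * a1 + B1 * b1 + C1 * c1 = 0 ∧ A2 * a2 + B2 * b2 + C2 * c2 = 0 ∧
        A1.degree < (k : WithBot ℕ) ∧ B1.degree ≤ (k : WithBot ℕ) ∧
        C1.degree ≤ (k : WithBot ℕ) ∧ A2.degree < (k : WithBot ℕ) ∧
        B2.degree ≤ (k : WithBot ℕ) ∧ C2.degree ≤ (k : WithBot ℕ) ∧
        (2 * X - 1) ^ (r + 1) ∣ (A1 - A2) - f ∧
        (2 * X - 1) ^ (r + 1) ∣ (B1 - B2) - g ∧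
        (2 * X - 1) ^ (r + 1) ∣ (C1 - C2) - h) := by
  -- the monic normalization `D` of `(2X-1)^(r+1)`
  set D : ℝ[X] := (X - C (2⁻¹ : ℝ)) ^ (r + 1) with hD
  have hDmon : D.Monic := (monic_X_sub_C _).pow _
  have hD0 : D ≠ 0 := hDmon.ne_zero
  have hDnd : D.natDegree = r + 1 := by
    rw [hD, natDegree_pow, natDegree_X_sub_C, mul_one]
  have hDdeg : D.degree = ((r + 1 : ℕ) : WithBot ℕ) := by
    rw [degree_eq_natDegree hD0, hDnd]
  have hpow : (2 * X - 1 : ℝ[X]) ^ (r+1) = C ((2:ℝ)^(r+1)) * D := by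
    rw [hD, show (2 * X - 1 : ℝ[X]) = C 2 * (X - C 2⁻¹) by
        rw [mul_sub, ← C_mul]; norm_num; exact (map_ofNat C 2).symm,
      mul_pow, ← C_pow]
  have hCu : (C ((2:ℝ)^(r+1))) * C (((2:ℝ)^(r+1))⁻¹) = 1 := by
    rw [← C_mul, mul_inv_cancel₀ (by positivity), C_1]
  -- divisibility by `(2X-1)^(r+1)` and by `D` are equivalent
  have hdD : ∀ x : ℝ[X], D ∣ x → (2 * X - 1) ^ (r+1) ∣ x := by
    rintro x ⟨t, rfl⟩
    refine ⟨C (((2:ℝ)^(r+1))⁻¹) * t, ?_⟩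
    rw [hpow]
    linear_combination (-(D*t)) * hCu
  have hDd : ∀ x : ℝ[X], (2 * X - 1) ^ (r+1) ∣ x → D ∣ x := by
    rintro x ⟨t, rfl⟩
    exact ⟨C ((2:ℝ)^(r+1)) * t, by rw [hpow]; ring⟩
  have ha1d : a1.degree ≤ (n1 : WithBot ℕ) := natDegree_le_iff_degree_le.mp (by omega)
  have hb1d : b1.degree ≤ (n1 : WithBot ℕ) := natDegree_le_iff_degree_le.mp (by omega)
  have hc1d : c1.degree ≤ (n1 : WithBot ℕ) := natDegree_le_iff_degree_le.mp (by omega)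
  refine ⟨?_, ?_, ?_⟩
  · -- Part 1 : surjectivity of ψ
    intro w hw
    obtain ⟨p, q, hpq⟩ := hbc1
    have hgdeg : ((p*w) %ₘ D).degree ≤ (k : WithBot ℕ) :=
      (deg_le_of_lt_succ (hDdeg ▸ degree_modByMonic_lt (p*w) hDmon)).trans (wb_cast_le (by omega))
    have hhdeg : ((q*w) %ₘ D).degree ≤ (k : WithBot ℕ) :=
      (deg_le_of_lt_succ (hDdeg ▸ degree_modByMonic_lt (q*w) hDmon)).trans (wb_cast_le (by omega))
    refine ⟨0, (p*w) %ₘ D, (q*w) %ₘ D, ?_, hgdeg, hhdeg, ?_⟩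
    · rw [degree_zero]; exact_mod_cast WithBot.bot_lt_coe k
    · apply hdD
      refine ⟨-(b1 * ((p*w) /ₘ D) + c1 * ((q*w) /ₘ D)), ?_⟩
      have h1 : (p*w) %ₘ D = p*w - D * ((p*w) /ₘ D) := modByMonic_eq_sub_mul_div _ _
      have h2 : (q*w) %ₘ D = q*w - D * ((q*w) /ₘ D) := modByMonic_eq_sub_mul_div _ _
      rw [h1, h2]
      linear_combination w * hpq
  · -- Part 2 : im φ ⊆ ker ψ
    intro A1 B1 C1 A2 B2 C2 h1 h2 _ _ _ _ _ _
    have key : a1 * (A1 - A2) + b1 * (B1 - B2) + c1 * (C1 - C2)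
        = -((a1 - a2) * A2 + (b1 - b2) * B2 + (c1 - c2) * C2) := by
      linear_combination h1 - h2
    rw [key]
    exact dvd_neg.mpr (dvd_add (dvd_add (ha.mul_right A2) (hb.mul_right B2)) (hc.mul_right C2))
  · -- Part 3 : ker ψ ⊆ im φ
    intro f g h hf hg hh hdvd
    -- reduce f, g, h modulo D
    have hfm : f - f %ₘ D = D * (f /ₘ D) := by
      rw [modByMonic_eq_sub_mul_div _ _]; ring
    have hgm : g - g %ₘ D = D * (g /ₘ D) := by
      rw [modByMonic_eq_sub_mul_div _ _]; ring
    have hhm : h - h %ₘ D = D * (h /ₘ D) := by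
      rw [modByMonic_eq_sub_mul_div _ _]; ring
    have hw'dvd : (2 * X - 1) ^ (r+1) ∣ a1 * (f %ₘ D) + b1 * (g %ₘ D) + c1 * (h %ₘ D) := by
      have h1 : a1 * (f %ₘ D) + b1 * (g %ₘ D) + c1 * (h %ₘ D)
          = (a1*f + b1*g + c1*h)
            - (a1 * (f - f %ₘ D) + b1 * (g - g %ₘ D) + c1 * (h - h %ₘ D)) := by ring
      rw [h1]
      exact dvd_sub hdvd (dvd_add (dvd_add
        ((hdD _ ⟨_, hfm⟩).mul_left a1)
        ((hdD _ ⟨_, hgm⟩).mul_left b1)) ((hdD _ ⟨_, hhm⟩).mul_left c1))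
    obtain ⟨m, hm⟩ := hDd _ hw'dvd
    have hf'd : (f %ₘ D).degree ≤ (r : WithBot ℕ) :=
      deg_le_of_lt_succ (hDdeg ▸ degree_modByMonic_lt f hDmon)
    have hg'd : (g %ₘ D).degree ≤ (r : WithBot ℕ) :=
      deg_le_of_lt_succ (hDdeg ▸ degree_modByMonic_lt g hDmon)
    have hh'd : (h %ₘ D).degree ≤ (r : WithBot ℕ) :=
      deg_le_of_lt_succ (hDdeg ▸ degree_modByMonic_lt h hDmon)
    have hw'deg : (a1 * (f %ₘ D) + b1 * (g %ₘ D) + c1 * (h %ₘ D)).degree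
        ≤ ((n1 + r : ℕ) : WithBot ℕ) := by
      have e1 : (a1 * (f %ₘ D)).degree ≤ ((n1 + r : ℕ) : WithBot ℕ) :=
        (degree_mul_le _ _).trans (by rw [Nat.cast_add]; exact add_le_add ha1d hf'd)
      have e2 : (b1 * (g %ₘ D)).degree ≤ ((n1 + r : ℕ) : WithBot ℕ) :=
        (degree_mul_le _ _).trans (by rw [Nat.cast_add]; exact add_le_add hb1d hg'd)
      have e3 : (c1 * (h %ₘ D)).degree ≤ ((n1 + r : ℕ) : WithBot ℕ) :=
        (degree_mul_le _ _).trans (by rw [Nat.cast_add]; exact add_le_add hc1d hh'd)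
      exact (degree_add_le _ _).trans (max_le ((degree_add_le _ _).trans (max_le e1 e2)) e3)
    have hmdeg : m.degree < (n1 : WithBot ℕ) := by
      by_contra hcon
      push_neg at hcon
      have hm0 : m ≠ 0 := by
        intro h0; rw [h0, degree_zero] at hcon
        exact absurd hcon (by simp)
      have hDm : (D * m).degree = ((r + 1 + m.natDegree : ℕ) : WithBot ℕ) := by
        rw [degree_mul, hDdeg, degree_eq_natDegree hm0, ← Nat.cast_add]
      rw [← hm] at hDm
      have h2 : r + 1 + m.natDegree ≤ n1 + r := by
        have := hDm ▸ hw'deg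
        exact_mod_cast this
      have h3 : n1 ≤ m.natDegree := by
        rw [degree_eq_natDegree hm0] at hcon
        exact_mod_cast hcon
      omega
    obtain ⟨α, β, γ, heq, hα, hβ, hγ⟩ := key_solve a1 b1 c1 m hac1 hbc1 n1 hn1 hmdeg
    have hDα : (D * α).degree < (k : WithBot ℕ) := by
      rcases eq_or_ne α 0 with rfl | hα0
      · rw [mul_zero, degree_zero]; exact_mod_cast WithBot.bot_lt_coe k
      · have hα2 : α.natDegree + 2 ≤ n1 := hα.resolve_left hα0
        have : (D * α).degree = ((r + 1 + α.natDegree : ℕ) : WithBot ℕ) := by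
          rw [degree_mul, hDdeg, degree_eq_natDegree hα0, ← Nat.cast_add]
        rw [this]; exact wb_cast_lt (by omega)
    have hDβ : (D * β).degree ≤ (k : WithBot ℕ) := by
      rcases eq_or_ne β 0 with rfl | hβ0
      · rw [mul_zero, degree_zero]; exact bot_le
      · have hβ2 : β.natDegree + 1 ≤ n1 := hβ.resolve_left hβ0
        have : (D * β).degree = ((r + 1 + β.natDegree : ℕ) : WithBot ℕ) := by
          rw [degree_mul, hDdeg, degree_eq_natDegree hβ0, ← Nat.cast_add]
        rw [this]; exact wb_cast_le (by omega)
    have hDγ : (D * γ).degree ≤ (k : WithBot ℕ) := by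
      rcases eq_or_ne γ 0 with rfl | hγ0
      · rw [mul_zero, degree_zero]; exact bot_le
      · have hγ2 : γ.natDegree + 1 ≤ n1 := hγ.resolve_left hγ0
        have : (D * γ).degree = ((r + 1 + γ.natDegree : ℕ) : WithBot ℕ) := by
          rw [degree_mul, hDdeg, degree_eq_natDegree hγ0, ← Nat.cast_add]
        rw [this]; exact wb_cast_le (by omega)
    have hf'k : (f %ₘ D).degree < (k : WithBot ℕ) := by
      by_cases hrk : r < k
      · exact lt_of_le_of_lt hf'd (wb_cast_lt hrk)
      · have hfD : f %ₘ D = f := (modByMonic_eq_self_iff hDmon).mpr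
          (by rw [hDdeg]; exact lt_of_lt_of_le hf (wb_cast_le (by omega)))
        rw [hfD]; exact hf
    refine ⟨f %ₘ D - D * α, g %ₘ D - D * β, h %ₘ D - D * γ, 0, 0, 0,
      by linear_combination hm - D * heq, by ring, ?_, ?_, ?_, ?_, ?_, ?_, ?_, ?_, ?_⟩
    · exact lt_of_le_of_lt (degree_sub_le _ _) (max_lt hf'k hDα)
    · exact (degree_sub_le _ _).trans
        (max_le (hg'd.trans (wb_cast_le (by omega))) hDβ)
    · exact (degree_sub_le _ _).trans
        (max_le (hh'd.trans (wb_cast_le (by omega))) hDγ)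
    · rw [degree_zero]; exact_mod_cast WithBot.bot_lt_coe k
    · rw [degree_zero]; exact bot_le
    · rw [degree_zero]; exact bot_le
    · apply hdD
      refine ⟨-(f /ₘ D) - α, ?_⟩
      linear_combination -hfm
    · apply hdD
      refine ⟨-(g /ₘ D) - β, ?_⟩
      linear_combination -hgm
    · apply hdD
      refine ⟨-(h /ₘ D) - γ, ?_⟩
      linear_combination -hhm
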